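/- Let E be an elliptic curve over F_q with trace of Frobenius τ, and let d be an integer coprime to q. The Lattès map L_d induces a permutation of P^1(F_q) if and only if (q+1)^2 - τ^2 is coprime to d. -/

import Mathlib

open WeierstrassCurve WeierstrassCurve.Affine

/-- The x-coordinate projection from the points of a Weierstrass curve to the projective line,
modeled as `Option`: the point at infinity maps to `none` (that is, `∞`), and an affine point
`(a, b)` maps to `some a`. -/
def xCoord {R : Type*} [CommRing R] {W : WeierstrassCurve.Affine R} : W.Point → Option R
  | .zero => none
  | .some x _ _ => some x

/-- The embedding of `P^1(F)` into `P^1(K)` induced by a field extension `F → K`;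
`none` is the point at infinity. -/
def p1Emb (F K : Type*) [Field F] [Field K] [Algebra F K] : Option F → Option K :=
  Option.map (algebraMap F K)

notation:max E "⟮" S "⟯" => WeierstrassCurve.Affine.Point (WeierstrassCurve.baseChange E S)

open Polynomial


section AuxRoot
variable {F : Type*} [Field F] [Fintype F] {K : Type*} [Field K] [Fintype K] [Algebra F K]

lemma aux_root (hK : Fintype.card K = (Fintype.card F) ^ 2)
    (g : F[X]) (h1 : 0 < g.natDegree) (h2 : g.natDegree ≤ 2) :
    ∃ r : K, Polynomial.aeval r g = 0 := by
  classical
  have hg0 : g ≠ 0 := fun h => by simp [h] at h1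
  have hnu : ¬ IsUnit g := by
    intro h
    rw [Polynomial.isUnit_iff] at h
    obtain ⟨c, -, rfl⟩ := h
    simp at h1
  obtain ⟨h, hirr, hdvd⟩ := WfDvdMonoid.exists_irreducible_factor hnu hg0
  suffices hr : ∃ r : K, Polynomial.aeval r h = 0 by
    obtain ⟨r, hr⟩ := hr
    obtain ⟨t, rfl⟩ := hdvd
    exact ⟨r, by simp [hr]⟩
  have hh0 : h ≠ 0 := hirr.ne_zero
  have hhpos : 0 < h.natDegree := hirr.natDegree_pos
  have hdeg0 : h.degree ≠ 0 := by
    rw [h.degree_eq_natDegree hh0]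
    intro hc
    have : h.natDegree = 0 := by exact_mod_cast hc
    omega
  suffices hs : Splits (h.map (algebraMap F K)) by
    obtain ⟨r, hr⟩ := Splits.exists_eval_eq_zero hs (by rwa [Polynomial.degree_map])
    exact ⟨r, by rwa [Polynomial.aeval_def, Polynomial.eval₂_eq_eval_map]⟩
  rcases Nat.lt_or_ge h.natDegree 2 with h' | h'
  · exact Splits.of_degree_le_one (le_trans Polynomial.degree_map_le
      (le_trans Polynomial.degree_le_natDegree (by exact_mod_cast Nat.lt_succ_iff.mp h')))
  · have hh2 : h.natDegree = 2 :=
      le_antisymm (le_trans (Polynomial.natDegree_le_of_dvd hdvd hg0) h2) h'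
    haveI := Fact.mk hirr
    set L := AdjoinRoot h with hL
    haveI : Module.Finite F L := PowerBasis.finite (AdjoinRoot.powerBasis hh0)
    haveI : Finite L := Module.finite_of_finite F
    haveI : Fintype L := Fintype.ofFinite L
    have hfr : Module.finrank F L = 2 := by
      rw [(AdjoinRoot.powerBasis hh0).finrank]
      simp [AdjoinRoot.powerBasis, hh2]
    have hcardL : Fintype.card L = Fintype.card K := by
      rw [Module.card_eq_pow_finrank (K := F) (V := L), hfr, hK]
    -- the root in L
    set r₀ : L := AdjoinRoot.root h with hr₀
    have haev : Polynomial.aeval r₀ (X ^ (Fintype.card K) - X : F[X]) = 0 := by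
      simp only [map_sub, map_pow, Polynomial.aeval_X]
      rw [← hcardL, FiniteField.pow_card, sub_self]
    have hmin : minpoly F r₀ ∣ (X ^ (Fintype.card K) - X : F[X]) := minpoly.dvd F r₀ haev
    have hmineq : minpoly F r₀ = h * C h.leadingCoeff⁻¹ := AdjoinRoot.minpoly_root hh0
    have hdvdΦ : h ∣ (X ^ (Fintype.card K) - X : F[X]) := by
      refine dvd_trans ?_ hmin
      rw [hmineq]
      exact (associated_mul_unit_right h _ (isUnit_C.mpr (isUnit_iff_ne_zero.mpr
        (inv_ne_zero (Polynomial.leadingCoeff_ne_zero.mpr hh0))))).dvd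
    -- now over K
    have hmapdvd : h.map (algebraMap F K) ∣ (X ^ (Fintype.card K) - X : K[X]) := by
      have := Polynomial.map_dvd (algebraMap F K) hdvdΦ
      rwa [Polynomial.map_sub, Polynomial.map_pow, Polynomial.map_X] at this
    have hΦ0 : (X ^ (Fintype.card K) - X : K[X]) ≠ 0 :=
      FiniteField.X_pow_card_sub_X_ne_zero K Fintype.one_lt_card
    have hΦsplits : Splits (X ^ (Fintype.card K) - X : K[X]) := by
      rw [Polynomial.splits_iff_card_roots, FiniteField.roots_X_pow_card_sub_X,
        FiniteField.X_pow_card_sub_X_natDegree_eq K Fintype.one_lt_card]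
      exact Finset.card_univ
    have := Splits.of_dvd hΦsplits hΦ0 hmapdvd
    exact this

end AuxRoot

section Frob
variable (F K : Type*) [Field F] [Fintype F] [Field K] [Fintype K] [Algebra F K]

lemma exists_frob : ∃ f : K →ₐ[F] K, ∀ a : K, f a = a ^ Fintype.card F := by
  obtain ⟨p, hc⟩ := CharP.exists F
  haveI := hc
  have hp : p.Prime := CharP.char_is_prime F p
  haveI : CharP K p := charP_of_injective_algebraMap (algebraMap F K).injective p
  haveI := Fact.mk hp
  obtain ⟨n, -, hcard⟩ := FiniteField.card F p
  refine ⟨{ toRingHom := iterateFrobenius K p n, commutes' := fun a => ?_ }, fun a => ?_⟩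
  · show iterateFrobenius K p n ((algebraMap F K) a) = (algebraMap F K) a
    rw [iterateFrobenius_def, ← map_pow, ← hcard, FiniteField.pow_card]
  · show iterateFrobenius K p n a = a ^ Fintype.card F
    rw [iterateFrobenius_def, hcard]

end Frob

set_option linter.unusedSectionVars false

section Fixed
variable {F K : Type*} [Field F] [Fintype F] [Field K] [Fintype K] [Algebra F K]

lemma aux_fixed {a : K} : a ^ Fintype.card F = a ↔ a ∈ Set.range (algebraMap F K) := by
  classical
  constructor
  · intro ha
    set q := Fintype.card F with hqdef
    have hq : 1 < q := Fintype.one_lt_card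
    have hΦ0 : (X ^ q - X : K[X]) ≠ 0 := FiniteField.X_pow_card_sub_X_ne_zero K hq
    set U : Finset K := Finset.univ.image (algebraMap F K) with hU
    have hUcard : U.card = q := by
      rw [hU, Finset.card_image_of_injective _ (algebraMap F K).injective, Finset.card_univ]
    by_contra hna
    have hsub : insert a U ⊆ (X ^ q - X : K[X]).roots.toFinset := by
      intro b hb
      rw [Multiset.mem_toFinset, Polynomial.mem_roots hΦ0]
      rcases Finset.mem_insert.mp hb with rfl | hbU
      · simp [Polynomial.IsRoot, sub_eq_zero, ha]
      · obtain ⟨c, -, rfl⟩ := Finset.mem_image.mp hbU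
        have : (algebraMap F K c) ^ q = algebraMap F K c := by
          rw [← map_pow, FiniteField.pow_card]
        simp [Polynomial.IsRoot, sub_eq_zero, this]
    have h1 : (insert a U).card = q + 1 := by
      rw [Finset.card_insert_of_notMem, hUcard]
      intro hmem
      obtain ⟨c, -, rfl⟩ := Finset.mem_image.mp hmem
      exact hna ⟨c, rfl⟩
    have h2 : (X ^ q - X : K[X]).roots.toFinset.card ≤ q := by
      refine le_trans (Multiset.toFinset_card_le _) (le_trans (Polynomial.card_roots' _) ?_)
      rw [FiniteField.X_pow_card_sub_X_natDegree_eq K hq]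
    have := Finset.card_le_card hsub
    omega
  · rintro ⟨b, rfl⟩
    rw [← map_pow, FiniteField.pow_card]

end Fixed



section PointLemmas
variable {R : Type*} [Field R] {W : WeierstrassCurve.Affine R}

lemma some_ext {x₁ y₁ x₂ y₂ : R} (h₁ : W.Nonsingular x₁ y₁) (h₂ : W.Nonsingular x₂ y₂)
    (hx : x₁ = x₂) (hy : y₁ = y₂) : Point.some _ _ h₁ = Point.some _ _ h₂ := by
  subst hx; subst hy; rfl

lemma xCoord_eq_none_iff {P : W.Point} : xCoord P = none ↔ P = 0 := by
  cases P with
  | zero => simp [xCoord]; rfl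
  | some _ _ h => simp [xCoord, Point.some_ne_zero h]

lemma xCoord_neg (P : W.Point) : xCoord (-P) = xCoord P := by
  cases P with
  | zero => rfl
  | some _ _ h => rfl

lemma eq_or_eq_neg_of_xCoord_eq {P Q : W.Point} (h : xCoord P = xCoord Q) :
    Q = P ∨ Q = -P := by
  cases P with
  | zero =>
    left
    exact (xCoord_eq_none_iff.mp h.symm) ▸ rfl
  | some _ _ hP =>
    cases Q with
    | zero => simp [xCoord] at h
    | some _ _ hQ =>
      rename_i x₁ y₁ x₂ y₂
      simp only [xCoord, Option.some.injEq] at h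
      rcases Y_eq_of_X_eq hQ.left hP.left h.symm with hy | hy
      · exact Or.inl (some_ext hQ hP h.symm hy)
      · right
        rw [Point.neg_some]
        exact some_ext hQ _ h.symm hy

end PointLemmas

section Curve
open Classical
variable {F : Type*} [Field F] [Fintype F] {K : Type*} [Field K] [Fintype K] [Algebra F K]
  {E : WeierstrassCurve F} [E.IsElliptic]

lemma point_finite : Finite E⟮K⟯ := by
  have hinj : Function.Injective (fun P : E⟮K⟯ => match P with
    | .zero => (none : Option (K × K))
    | .some x y _ => some (x, y)) := by
    intro P Q h
    cases P with
    | zero =>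
      cases Q with
      | zero => rfl
      | some _ _ hQ => simp at h
    | some _ _ hP =>
      cases Q with
      | zero => simp at h
      | some _ _ hQ =>
        simp only [Option.some.injEq, Prod.mk.injEq] at h
        exact some_ext _ _ h.1 h.2
  exact Finite.of_injective _ hinj

lemma xCoord_map (f : K →ₐ[F] K) (P : E⟮K⟯) :
    xCoord (Point.map (W' := E) f P) = Option.map f (xCoord P) := by
  cases P <;> rfl

lemma mem_S_iff (f : K →ₐ[F] K) (hf : ∀ a : K, f a = a ^ Fintype.card F) (P : E⟮K⟯) :
    (Point.map (W' := E) f P = P ∨ Point.map (W' := E) f P = -P) ↔ xCoord P ∈ Set.range (p1Emb F K) := by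
  constructor
  · intro h
    cases P with
    | zero => exact ⟨none, rfl⟩
    | some _ _ hP =>
      rename_i x y
      have hx : f x = x := by
        rcases h with h | h
        · have := congrArg xCoord h
          rw [xCoord_map] at this
          simpa [xCoord] using this
        · have := congrArg xCoord h
          rw [xCoord_map, xCoord_neg] at this
          simpa [xCoord] using this
      rw [hf] at hx
      obtain ⟨a, ha⟩ := aux_fixed.mp hx
      exact ⟨some a, by simp [p1Emb, xCoord, ha]⟩
  · rintro ⟨ξ, hξ⟩
    cases P with
    | zero => left; rfl
    | some _ _ hP =>
      rename_i x y
      cases ξ with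
      | none => simp [p1Emb, xCoord] at hξ
      | some a =>
        simp only [p1Emb, Option.map_some, xCoord, Option.some.injEq] at hξ
        have hx : f x = x := by
          rw [hf]
          exact aux_fixed.mpr ⟨a, hξ⟩
        have hxc : xCoord (Point.map (W' := E) f (Point.some _ _ hP)) = xCoord (Point.some _ _ hP) := by
          rw [xCoord_map]
          simp [xCoord, hx]
        rcases eq_or_eq_neg_of_xCoord_eq hxc with h | h
        · left; exact h.symm
        · right
          simpa using (congrArg (fun z => -z) h).symm

lemma exists_point_fiber (hK : Fintype.card K = Fintype.card F ^ 2) (a : F) :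
    ∃ P : E⟮K⟯, xCoord P = some (algebraMap F K a) := by
  haveI : (E.baseChange K).IsElliptic := inferInstanceAs ((E.map (algebraMap F K)).IsElliptic)
  set g : F[X] := X ^ 2 + Polynomial.C (E.a₁ * a + E.a₃) * X -
    Polynomial.C (a ^ 3 + E.a₂ * a ^ 2 + E.a₄ * a + E.a₆) with hg
  have hdeg : g.natDegree = 2 := by
    rw [hg]
    compute_degree!
  obtain ⟨r, hr⟩ := aux_root hK g (by omega) (le_of_eq hdeg)
  have hr' : r ^ 2 + (algebraMap F K (E.a₁ * a + E.a₃)) * r -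
      algebraMap F K (a ^ 3 + E.a₂ * a ^ 2 + E.a₄ * a + E.a₆) = 0 := by
    simpa [hg] using hr
  have heq : (E.baseChange K).toAffine.Equation (algebraMap F K a) r := by
    rw [equation_iff]
    simp only [map_add, map_mul, map_pow, WeierstrassCurve.map_a₁, WeierstrassCurve.map_a₂,
      WeierstrassCurve.map_a₃, WeierstrassCurve.map_a₄, WeierstrassCurve.map_a₆, WeierstrassCurve.baseChange] at hr' ⊢
    linear_combination hr'
  exact ⟨Point.some _ _ (WeierstrassCurve.Affine.equation_iff_nonsingular.mp heq), rfl⟩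

end Curve

section Count
open Classical
variable {F : Type*} [Field F] [Fintype F] {K : Type*} [Field K] [Fintype K] [Algebra F K]
  {E : WeierstrassCurve F} [E.IsElliptic]

lemma some_inj {R : Type*} [Field R] {W : WeierstrassCurve.Affine R} {x₁ y₁ x₂ y₂ : R}
    {h₁ : W.Nonsingular x₁ y₁} {h₂ : W.Nonsingular x₂ y₂}
    (h : Point.some _ _ h₁ = Point.some _ _ h₂) : x₁ = x₂ ∧ y₁ = y₂ := by
  cases h
  exact ⟨rfl, rfl⟩

lemma card_G (f : K →ₐ[F] K) (hf : ∀ a : K, f a = a ^ Fintype.card F) :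
    Nat.card {P : E⟮K⟯ // Point.map (W' := E) f P = P} = Nat.card E⟮F⟯ := by
  symm
  refine Nat.card_eq_of_bijective
    (fun Q => ⟨Point.map (W' := E) (Algebra.ofId F K) Q, ?_⟩) ⟨?_, ?_⟩
  · -- fixed by f
    cases Q with
    | zero => rfl
    | some _ _ hQ =>
      rename_i x y
      exact some_ext _ _ (f.commutes x) (f.commutes y)
  · intro Q₁ Q₂ h
    exact Point.map_injective (W' := E) (Algebra.ofId F K) (congrArg Subtype.val h)
  · rintro ⟨P, hP⟩
    cases P with
    | zero => exact ⟨0, rfl⟩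
    | some _ _ hP' =>
      rename_i x y
      obtain ⟨hx, hy⟩ := some_inj hP
      rw [hf] at hx hy
      obtain ⟨a, ha⟩ := aux_fixed.mp hx
      obtain ⟨b, hb⟩ := aux_fixed.mp hy
      have hns : ((E.baseChange F).toAffine).Nonsingular a b := by
        have := hP'
        rw [← ha, ← hb] at this
        exact (WeierstrassCurve.Affine.baseChange_nonsingular (W := E) (A := F) (B := K)
          (f := Algebra.ofId F K) (Algebra.ofId F K).injective a b).mp this
      refine ⟨Point.some _ _ hns, ?_⟩
      apply Subtype.ext
      exact some_ext _ _ ha hb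

lemma card_GT (hK : Fintype.card K = Fintype.card F ^ 2)
    (f : K →ₐ[F] K) (hf : ∀ a : K, f a = a ^ Fintype.card F) :
    Nat.card {P : E⟮K⟯ // Point.map (W' := E) f P = P} +
      Nat.card {P : E⟮K⟯ // Point.map (W' := E) f P = -P} = 2 * (Fintype.card F + 1) := by
  classical
  haveI : Finite E⟮K⟯ := point_finite
  haveI : Fintype E⟮K⟯ := Fintype.ofFinite _
  set φ : E⟮K⟯ →+ E⟮K⟯ := Point.map (W' := E) f with hφ
  set Gf : Finset E⟮K⟯ := Finset.univ.filter (fun P => φ P = P) with hGf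
  set Tf : Finset E⟮K⟯ := Finset.univ.filter (fun P => φ P = -P) with hTf
  set Xf : Finset (Option K) := Finset.univ.image (p1Emb F K) with hXf
  have hXcard : Xf.card = Fintype.card F + 1 := by
    have hinj : Function.Injective (p1Emb F K) :=
      Option.map_injective (algebraMap F K).injective
    rw [hXf, Finset.card_image_of_injective _ hinj, Finset.card_univ, Fintype.card_option]
  have hmemX : ∀ ξ : Option K, ξ ∈ Xf ↔ ξ ∈ Set.range (p1Emb F K) := by
    intro ξ
    simp [hXf, Set.mem_range, eq_comm]
  have hGmaps : ∀ P ∈ Gf, xCoord P ∈ Xf := by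
    intro P hP
    rw [hGf, Finset.mem_filter] at hP
    rw [hmemX]
    exact (mem_S_iff f hf P).mp (Or.inl hP.2)
  have hTmaps : ∀ P ∈ Tf, xCoord P ∈ Xf := by
    intro P hP
    rw [hTf, Finset.mem_filter] at hP
    rw [hmemX]
    exact (mem_S_iff f hf P).mp (Or.inr hP.2)
  have hcard1 : Nat.card {P : E⟮K⟯ // Point.map (W' := E) f P = P} = Gf.card := by
    rw [Nat.card_eq_fintype_card, Fintype.card_subtype]
  have hcard2 : Nat.card {P : E⟮K⟯ // Point.map (W' := E) f P = -P} = Tf.card := by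
    rw [Nat.card_eq_fintype_card, Fintype.card_subtype]
  rw [hcard1, hcard2, Finset.card_eq_sum_card_fiberwise hGmaps,
    Finset.card_eq_sum_card_fiberwise hTmaps, ← Finset.sum_add_distrib]
  have key : ∀ ξ ∈ Xf, ((Gf.filter (fun P => xCoord P = ξ)).card +
      (Tf.filter (fun P => xCoord P = ξ)).card) = 2 := by
    intro ξ hξ
    rw [hXf, Finset.mem_image] at hξ
    obtain ⟨o, -, ho⟩ := hξ
    cases o with
    | none =>
      -- ξ = none; both fibers are {0}
      have h1 : Gf.filter (fun P => xCoord P = ξ) = {0} := by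
        ext P
        simp only [Finset.mem_filter, Finset.mem_singleton, hGf, Finset.mem_univ, true_and]
        constructor
        · rintro ⟨-, h2⟩
          rw [← ho] at h2
          exact xCoord_eq_none_iff.mp h2
        · rintro rfl
          exact ⟨map_zero φ, by rw [← ho]; rfl⟩
      have h2 : Tf.filter (fun P => xCoord P = ξ) = {0} := by
        ext P
        simp only [Finset.mem_filter, Finset.mem_singleton, hTf, Finset.mem_univ, true_and]
        constructor
        · rintro ⟨-, h2⟩
          rw [← ho] at h2
          exact xCoord_eq_none_iff.mp h2
        · rintro rfl
          exact ⟨by rw [map_zero φ, neg_zero], by rw [← ho]; rfl⟩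
      rw [h1, h2]
      simp
    | some a =>
      obtain ⟨P₀, hP₀⟩ := exists_point_fiber (E := E) hK a
      have hP₀X : xCoord P₀ = ξ := by rw [hP₀, ← ho]; rfl
      have hS : φ P₀ = P₀ ∨ φ P₀ = -P₀ :=
        (mem_S_iff f hf P₀).mpr ⟨some a, by rw [hP₀]; rfl⟩
      have hfiber : ∀ P : E⟮K⟯, xCoord P = ξ ↔ (P = P₀ ∨ P = -P₀) := by
        intro P
        constructor
        · intro h
          exact eq_or_eq_neg_of_xCoord_eq (P := P₀) (Q := P) (by rw [h, hP₀X])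
        · rintro (rfl | rfl)
          · exact hP₀X
          · rw [xCoord_neg, hP₀X]
      have hGfil : ∀ P, P ∈ Gf.filter (fun P => xCoord P = ξ) ↔ (φ P = P ∧ (P = P₀ ∨ P = -P₀)) := by
        intro P
        simp only [Finset.mem_filter, hGf, Finset.mem_univ, true_and, hfiber]
      have hTfil : ∀ P, P ∈ Tf.filter (fun P => xCoord P = ξ) ↔ (φ P = -P ∧ (P = P₀ ∨ P = -P₀)) := by
        intro P
        simp only [Finset.mem_filter, hTf, Finset.mem_univ, true_and, hfiber]
      by_cases hdeg : P₀ = -P₀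
      · -- degenerate fiber: single point, in both G and T
        have hGboth : φ P₀ = P₀ ∧ φ P₀ = -P₀ := by
          rcases hS with h | h
          · exact ⟨h, h.trans hdeg⟩
          · exact ⟨h.trans hdeg.symm, h⟩
        have h1 : Gf.filter (fun P => xCoord P = ξ) = {P₀} := by
          ext P
          rw [hGfil, Finset.mem_singleton]
          constructor
          · rintro ⟨-, h | h⟩
            · exact h
            · exact h.trans hdeg.symm
          · rintro rfl
            exact ⟨hGboth.1, Or.inl rfl⟩
        have h2 : Tf.filter (fun P => xCoord P = ξ) = {P₀} := by
          ext P
          rw [hTfil, Finset.mem_singleton]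
          constructor
          · rintro ⟨-, h | h⟩
            · exact h
            · exact h.trans hdeg.symm
          · rintro rfl
            exact ⟨hGboth.2, Or.inl rfl⟩
        rw [h1, h2]
        simp
      · rcases hS with hG0 | hT0
        · -- both P₀, -P₀ in G, T-fiber empty
          have hGneg : φ (-P₀) = -P₀ := by rw [map_neg, hG0]
          have h1 : Gf.filter (fun P => xCoord P = ξ) = {P₀, -P₀} := by
            ext P
            rw [hGfil, Finset.mem_insert, Finset.mem_singleton]
            constructor
            · rintro ⟨-, h⟩; exact h
            · rintro (rfl | rfl)
              · exact ⟨hG0, Or.inl rfl⟩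
              · exact ⟨hGneg, Or.inr rfl⟩
          have h2 : Tf.filter (fun P => xCoord P = ξ) = ∅ := by
            ext P
            rw [hTfil]
            simp only [Finset.notMem_empty, iff_false, not_and]
            rintro hT h
            apply hdeg
            rcases h with h | h
            · have h1 : φ P₀ = -P₀ := by rw [← h]; exact hT
              exact hG0.symm.trans h1
            · have h1 : φ (-P₀) = -(-P₀) := by rw [← h]; exact hT
              rw [map_neg, hG0, neg_neg] at h1
              exact h1.symm
          rw [h1, h2, Finset.card_pair hdeg]
          simp
        · -- both in T, G-fiber empty
          have hTneg : φ (-P₀) = P₀ := by rw [map_neg, hT0, neg_neg]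
          have h1 : Gf.filter (fun P => xCoord P = ξ) = ∅ := by
            ext P
            rw [hGfil]
            simp only [Finset.notMem_empty, iff_false, not_and]
            rintro hG h
            apply hdeg
            rcases h with h | h
            · have h1 : φ P₀ = P₀ := by rw [← h]; exact hG
              exact h1.symm.trans hT0
            · have h1 : φ (-P₀) = -P₀ := by rw [← h]; exact hG
              rw [map_neg, hT0, neg_neg] at h1
              exact h1
          have h2 : Tf.filter (fun P => xCoord P = ξ) = {P₀, -P₀} := by
            ext P
            rw [hTfil, Finset.mem_insert, Finset.mem_singleton]
            constructor
            · rintro ⟨-, h⟩; exact h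
            · rintro (rfl | rfl)
              · exact ⟨hT0, Or.inl rfl⟩
              · exact ⟨by rw [hTneg, neg_neg], Or.inr rfl⟩
          rw [h1, h2, Finset.card_pair hdeg]
          simp
  rw [Finset.sum_congr rfl key, Finset.sum_const, smul_eq_mul, hXcard, mul_comm]

end Count

def eqSub {A : Type*} [AddCommGroup A] (f : A →+ A) : AddSubgroup A where
  carrier := {x | f x = x}
  add_mem' := by
    intro a b ha hb
    simp only [Set.mem_setOf_eq, map_add] at *
    rw [ha, hb]
  zero_mem' := map_zero f
  neg_mem' := by
    intro a ha
    simp only [Set.mem_setOf_eq, map_neg] at *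
    rw [ha]

def negSub {A : Type*} [AddCommGroup A] (f : A →+ A) : AddSubgroup A where
  carrier := {x | f x = -x}
  add_mem' := by
    intro a b ha hb
    simp only [Set.mem_setOf_eq, map_add] at *
    rw [ha, hb, neg_add]
  zero_mem' := by simp [map_zero]
  neg_mem' := by
    intro a ha
    simp only [Set.mem_setOf_eq, map_neg] at *
    rw [ha]

lemma mem_eqSub {A : Type*} [AddCommGroup A] (f : A →+ A) {x : A} : x ∈ eqSub f ↔ f x = x :=
  Iff.rfl

lemma mem_negSub {A : Type*} [AddCommGroup A] (f : A →+ A) {x : A} : x ∈ negSub f ↔ f x = -x :=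
  Iff.rfl


open Classical in
/-- Let `E` be an elliptic curve over a finite field `F` with `q` elements and trace of
Frobenius `τ`, and let `d` be an integer coprime to `q`. The Lattès map `L_d` induces a
permutation of `P^1(F)` (viewed inside `P^1(K)` for the quadratic extension `K/F`) if and only
if `(q+1)^2 - τ^2` is coprime to `d`. -/
theorem lattes_permutation_iff
    {F : Type*} [Field F] [Fintype F] {K : Type*} [Field K] [Fintype K] [Algebra F K]
    (hK : Fintype.card K = (Fintype.card F) ^ 2)
    (E : WeierstrassCurve F) [E.IsElliptic]
    (τ : ℤ) (hτ : (Nat.card (WeierstrassCurve.Affine.Point (WeierstrassCurve.baseChange E F)) : ℤ) = Fintype.card F + 1 - τ)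
    (d : ℤ) (hd : Int.gcd d (Fintype.card F) = 1)
    (Ld : Option K → Option K) (hLd : ∀ P : WeierstrassCurve.Affine.Point (WeierstrassCurve.baseChange E K), Ld (xCoord P) = xCoord (d • P)) :
    Set.BijOn Ld (Set.range (p1Emb F K)) (Set.range (p1Emb F K)) ↔
      Int.gcd (((Fintype.card F : ℤ) + 1) ^ 2 - τ ^ 2) d = 1 := by
  classical
  obtain ⟨f, hf⟩ := exists_frob F K
  haveI : Finite E⟮K⟯ := point_finite
  set q : ℕ := Fintype.card F with hq
  set φ : E⟮K⟯ →+ E⟮K⟯ := Point.map (W' := E) f with hφ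
  set G := eqSub φ with hG
  set T := negSub φ with hT
  set X : Set (Option K) := Set.range (p1Emb F K) with hX
  have hmemS : ∀ P : E⟮K⟯, (φ P = P ∨ φ P = -P) ↔ xCoord P ∈ X := mem_S_iff f hf
  have hGcard : (Nat.card G : ℤ) = (q : ℤ) + 1 - τ := by
    rw [← hτ]
    congr 1
    rw [← card_G f hf]
    exact Nat.card_congr (Equiv.subtypeEquivRight fun x => Iff.rfl)
  have hGT : (Nat.card G : ℤ) + Nat.card T = 2 * ((q : ℤ) + 1) := by
    have h2 := card_GT (E := E) hK f hf
    have e1 : Nat.card G = Nat.card {P : E⟮K⟯ // Point.map (W' := E) f P = P} :=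
      Nat.card_congr (Equiv.subtypeEquivRight fun x => Iff.rfl)
    have e2 : Nat.card T = Nat.card {P : E⟮K⟯ // Point.map (W' := E) f P = -P} :=
      Nat.card_congr (Equiv.subtypeEquivRight fun x => Iff.rfl)
    rw [e1, e2]
    exact_mod_cast h2
  have hTcard : (Nat.card T : ℤ) = (q : ℤ) + 1 + τ := by linarith
  have hprod : (Nat.card G : ℤ) * Nat.card T = ((q : ℤ) + 1) ^ 2 - τ ^ 2 := by
    rw [hGcard, hTcard]; ring
  have hfiberX : ∀ ξ ∈ X, ∃ P : E⟮K⟯, xCoord P = ξ ∧ (φ P = P ∨ φ P = -P) := by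
    rintro ξ ⟨o, rfl⟩
    cases o with
    | none => exact ⟨0, rfl, Or.inl (map_zero φ)⟩
    | some a =>
      obtain ⟨P, hP⟩ := exists_point_fiber (E := E) hK a
      exact ⟨P, hP, (hmemS P).mpr ⟨some a, hP.symm⟩⟩
  have hmapsTo : Set.MapsTo Ld X X := by
    rintro ξ hξ
    obtain ⟨P, hPx, hPS⟩ := hfiberX ξ hξ
    rw [← hPx, hLd P]
    apply (hmemS _).mp
    rcases hPS with h | h
    · left; rw [map_zsmul, h]
    · right; rw [map_zsmul, h, smul_neg]
  constructor
  · intro hbij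
    by_contra hne
    obtain ⟨p, hp, hpdvd⟩ := Nat.exists_prime_and_dvd hne
    haveI := Fact.mk hp
    have hdvd1 : (p : ℤ) ∣ (Nat.card G : ℤ) * Nat.card T := by
      rw [hprod]
      exact dvd_trans (Int.natCast_dvd_natCast.mpr hpdvd) (Int.gcd_dvd_left _ _)
    have hdvd2 : (p : ℤ) ∣ d := dvd_trans (Int.natCast_dvd_natCast.mpr hpdvd) (Int.gcd_dvd_right _ _)
    have hpZ : Prime (p : ℤ) := Nat.prime_iff_prime_int.mp hp
    have hex : ∃ P : E⟮K⟯, addOrderOf P = p ∧ (φ P = P ∨ φ P = -P) := by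
      rcases hpZ.dvd_mul.mp hdvd1 with hdG | hdT
      · haveI : Fintype G := Fintype.ofFinite _
        obtain ⟨x, hx⟩ := exists_prime_addOrderOf_dvd_card (G := G) p
          (by rw [← Nat.card_eq_fintype_card]; exact_mod_cast hdG)
        refine ⟨(x : E⟮K⟯), ?_, Or.inl x.2⟩
        rw [← hx]
        exact addOrderOf_injective G.subtype Subtype.coe_injective x
      · haveI : Fintype T := Fintype.ofFinite _
        obtain ⟨x, hx⟩ := exists_prime_addOrderOf_dvd_card (G := T) p
          (by rw [← Nat.card_eq_fintype_card]; exact_mod_cast hdT)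
        refine ⟨(x : E⟮K⟯), ?_, Or.inr x.2⟩
        rw [← hx]
        exact addOrderOf_injective T.subtype Subtype.coe_injective x
    obtain ⟨P, hordP, hPS⟩ := hex
    have hP0 : P ≠ 0 := by
      intro h
      rw [h, addOrderOf_zero] at hordP
      exact hp.ne_one hordP.symm
    have hdP : d • P = 0 := by
      rw [← addOrderOf_dvd_iff_zsmul_eq_zero, hordP]
      exact hdvd2
    have hxP : xCoord P ∈ X := (hmemS P).mp hPS
    have hnone : (none : Option K) ∈ X := ⟨none, rfl⟩
    have e1 : Ld (xCoord P) = none := by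
      rw [hLd P, hdP]
      exact xCoord_eq_none_iff.mpr rfl
    have e2 : Ld (none : Option K) = none := by
      have h0 : xCoord (0 : E⟮K⟯) = none := rfl
      have h1 := hLd 0
      rw [smul_zero, h0] at h1
      exact h1
    have := hbij.injOn hxP hnone (by rw [e1, e2])
    exact hP0 (xCoord_eq_none_iff.mp this)
  · intro hgcd
    have hco : IsCoprime ((Nat.card G : ℤ) * Nat.card T) d := by
      rw [hprod]
      exact Int.isCoprime_iff_gcd_eq_one.mpr hgcd
    have key : ∀ (A : AddSubgroup E⟮K⟯), IsCoprime (Nat.card A : ℤ) d →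
        ∀ P ∈ A, ∃ Q ∈ A, d • Q = P := by
      intro A hA P hPA
      haveI : Finite A := Subtype.finite
      have hinj : Function.Injective (fun R : A => d • R) := by
        intro R₁ R₂ hR
        have h0 : d • (R₁ - R₂) = 0 := by
          rw [smul_sub, sub_eq_zero]
          exact hR
        have hdvd : (addOrderOf (R₁ - R₂) : ℤ) ∣ d :=
          addOrderOf_dvd_iff_zsmul_eq_zero.mpr h0
        have hdvd2 : (addOrderOf (R₁ - R₂) : ℤ) ∣ (Nat.card A : ℤ) :=
          Int.natCast_dvd_natCast.mpr (addOrderOf_dvd_natCard _)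
        have hu := hA.isUnit_of_dvd' hdvd2 hdvd
        have h1 : addOrderOf (R₁ - R₂) = 1 := by
          rcases Int.isUnit_iff.mp hu with h | h
          · exact_mod_cast h
          · exfalso
            have : (0 : ℤ) ≤ (addOrderOf (R₁ - R₂) : ℤ) := Int.natCast_nonneg _
            omega
        have := AddMonoid.addOrderOf_eq_one_iff.mp h1
        rwa [sub_eq_zero] at this
      have hsurjA : Function.Surjective (fun R : A => d • R) :=
        Finite.surjective_of_injective hinj
      obtain ⟨Q, hQ⟩ := hsurjA ⟨P, hPA⟩
      refine ⟨(Q : E⟮K⟯), Q.2, ?_⟩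
      have := congrArg (Subtype.val) hQ
      simpa using this
    have hsurj : Set.SurjOn Ld X X := by
      rintro ξ hξ
      obtain ⟨P, hPx, hPS⟩ := hfiberX ξ hξ
      rcases hPS with h | h
      · obtain ⟨Q, hQA, hQ⟩ := key G (hco.of_mul_left_left) P h
        refine ⟨xCoord Q, (hmemS Q).mp (Or.inl hQA), ?_⟩
        rw [hLd Q, hQ, hPx]
      · obtain ⟨Q, hQA, hQ⟩ := key T (hco.of_mul_left_right) P h
        refine ⟨xCoord Q, (hmemS Q).mp (Or.inr hQA), ?_⟩
        rw [hLd Q, hQ, hPx]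
    exact ((Set.Finite.surjOn_iff_bijOn_of_mapsTo (Set.finite_range _) hmapsTo).mp hsurj)
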